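/- The set of asymptoty classes of geodesic rays from the origin in ℤ² with the standard word metric has the cardinality of the continuum. -/

import Mathlib

/-- A geodesic ray from `0` in `Cay(ℤ², {(1,0),(0,1)})`, given by its sequence
of unit steps. -/
def IsGeodesicStepSeq (w : ℕ → ℤ × ℤ) : Prop :=
  (∀ i, w i = (1, 0) ∨ w i = (-1, 0) ∨ w i = (0, 1) ∨ w i = (0, -1)) ∧
  ∀ n : ℕ, |(∑ i ∈ Finset.range n, w i).1| + |(∑ i ∈ Finset.range n, w i).2| = n

/-- Position of the ray after `n` steps. -/
def rayPos (w : ℕ → ℤ × ℤ) (n : ℕ) : ℤ × ℤ := ∑ i ∈ Finset.range n, w i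

/-- Two rays are asymptotic if their positions stay at uniformly bounded ℓ¹
distance. -/
def Asymp (w w' : {w : ℕ → ℤ × ℤ // IsGeodesicStepSeq w}) : Prop :=
  ∃ M : ℤ, ∀ n : ℕ,
    |(rayPos w.1 n).1 - (rayPos w'.1 n).1| + |(rayPos w.1 n).2 - (rayPos w'.1 n).2| ≤ M

namespace BZ2

/-- The boolean direction of step `n` of the ray coded by `a`. -/
def bitf (a : ℕ → Bool) (n : ℕ) : Bool := a (Nat.unpair (Nat.log 2 (n + 1))).1

/-- The step sequence of the ray coded by `a`. -/
def stepSeq (a : ℕ → Bool) (n : ℕ) : ℤ × ℤ := if bitf a n then (1, 0) else (0, 1)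

/-- Number of horizontal steps among the first `n`. -/
def S (a : ℕ → Bool) (n : ℕ) : ℤ :=
  ∑ i ∈ Finset.range n, (if bitf a i then (1 : ℤ) else 0)

lemma S_nonneg (a : ℕ → Bool) (n : ℕ) : 0 ≤ S a n :=
  Finset.sum_nonneg fun i _ => by split <;> norm_num

lemma S_le (a : ℕ → Bool) (n : ℕ) : S a n ≤ n := by
  calc S a n ≤ ∑ _i ∈ Finset.range n, (1 : ℤ) :=
        Finset.sum_le_sum fun i _ => by split <;> norm_num
    _ = n := by simp

lemma rayPos_eq (a : ℕ → Bool) (n : ℕ) :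
    rayPos (stepSeq a) n = (S a n, (n : ℤ) - S a n) := by
  induction n with
  | zero => simp [rayPos, S]; rfl
  | succ n ih =>
    unfold rayPos S at *
    rw [Finset.sum_range_succ, ih, Finset.sum_range_succ]
    by_cases h : bitf a n <;> simp [stepSeq, h, Prod.ext_iff] <;> push_cast <;> ring

lemma geo (a : ℕ → Bool) : IsGeodesicStepSeq (stepSeq a) := by
  constructor
  · intro i; unfold stepSeq; split
    · exact Or.inl rfl
    · exact Or.inr (Or.inr (Or.inl rfl))
  · intro n
    have h : (∑ i ∈ Finset.range n, stepSeq a i) = rayPos (stepSeq a) n := rfl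
    rw [h, rayPos_eq]
    have h1 := S_nonneg a n
    have h2 := S_le a n
    simp only
    rw [abs_of_nonneg h1, abs_of_nonneg (by omega)]
    omega

lemma bitf_block {k i : ℕ} (h1 : 2 ^ k - 1 ≤ i) (h2 : i < 2 ^ (k + 1) - 1) (a : ℕ → Bool) :
    bitf a i = a (Nat.unpair k).1 := by
  have hk : Nat.log 2 (i + 1) = k := by
    have ha : 1 ≤ 2 ^ k := Nat.one_le_two_pow
    have hb : 1 ≤ 2 ^ (k + 1) := Nat.one_le_two_pow
    exact Nat.log_eq_of_pow_le_of_lt_pow (by omega) (by omega)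
  unfold bitf; rw [hk]

lemma S_block (a : ℕ → Bool) (k : ℕ) :
    S a (2 ^ (k + 1) - 1) - S a (2 ^ k - 1)
      = if a (Nat.unpair k).1 then (2 ^ k : ℤ) else 0 := by
  have hpow : (2 : ℕ) ^ (k + 1) = 2 * 2 ^ k := by ring
  have h1 : 1 ≤ (2 : ℕ) ^ k := Nat.one_le_two_pow
  have hle : 2 ^ k - 1 ≤ 2 ^ (k + 1) - 1 := by omega
  unfold S
  rw [← Finset.sum_Ico_eq_sub _ hle]
  have hcong : (∑ i ∈ Finset.Ico (2 ^ k - 1) (2 ^ (k + 1) - 1),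
        if bitf a i then (1 : ℤ) else 0)
      = ∑ _i ∈ Finset.Ico (2 ^ k - 1) (2 ^ (k + 1) - 1),
        (if a (Nat.unpair k).1 then (1 : ℤ) else 0) :=
    Finset.sum_congr rfl fun i hi => by
      rw [Finset.mem_Ico] at hi
      rw [bitf_block hi.1 hi.2 a]
  rw [hcong, Finset.sum_const, Nat.card_Ico]
  have hcard : 2 ^ (k + 1) - 1 - (2 ^ k - 1) = 2 ^ k := by omega
  rw [hcard]
  split <;> simp

lemma asymp_equiv : Equivalence Asymp := by
  refine ⟨fun w => ⟨0, fun n => by simp⟩, ?_, ?_⟩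
  · rintro x y ⟨M, hM⟩
    refine ⟨M, fun n => ?_⟩
    rw [abs_sub_comm, abs_sub_comm ((rayPos y.1 n).2)]
    exact hM n
  · rintro x y z ⟨M, hM⟩ ⟨M', hM'⟩
    refine ⟨M + M', fun n => ?_⟩
    have h1 := hM n
    have h2 := hM' n
    have t1 := abs_sub_le (rayPos x.1 n).1 (rayPos y.1 n).1 (rayPos z.1 n).1
    have t2 := abs_sub_le (rayPos x.1 n).2 (rayPos y.1 n).2 (rayPos z.1 n).2
    linarith

lemma not_asymp {a a' : ℕ → Bool} (h : a ≠ a') :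
    ¬ Asymp ⟨stepSeq a, geo a⟩ ⟨stepSeq a', geo a'⟩ := by
  rintro ⟨M, hM⟩
  obtain ⟨m, hm⟩ : ∃ m, a m ≠ a' m := Function.ne_iff.mp h
  set k := Nat.pair m M.toNat with hk
  have hkM : M < (2 : ℤ) ^ k := by
    have e1 : M ≤ (M.toNat : ℤ) := Int.self_le_toNat M
    have e2 : M.toNat < 2 ^ M.toNat := Nat.lt_two_pow_self
    have e3 : M.toNat ≤ k := Nat.right_le_pair m M.toNat
    have e4 : (2 : ℕ) ^ M.toNat ≤ 2 ^ k := Nat.pow_le_pow_right (by norm_num) e3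
    have : M.toNat < 2 ^ k := lt_of_lt_of_le e2 e4
    calc M ≤ (M.toNat : ℤ) := e1
      _ < ((2 ^ k : ℕ) : ℤ) := by exact_mod_cast this
      _ = (2 : ℤ) ^ k := by push_cast; ring
  have hdist : ∀ n, 2 * |S a n - S a' n| ≤ M := by
    intro n
    have hn := hM n
    simp only [rayPos_eq] at hn
    have : ((n : ℤ) - S a n) - ((n : ℤ) - S a' n) = -(S a n - S a' n) := by ring
    rw [this, abs_neg] at hn
    linarith
  have hd1 := hdist (2 ^ k - 1)
  have hd2 := hdist (2 ^ (k + 1) - 1)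
  have hS := S_block a k
  have hS' := S_block a' k
  have hne : a (Nat.unpair k).1 ≠ a' (Nat.unpair k).1 := by
    rw [hk, Nat.unpair_pair]; exact hm
  have ha1 : S a (2 ^ k - 1) - S a' (2 ^ k - 1) ≤ |S a (2 ^ k - 1) - S a' (2 ^ k - 1)| :=
    le_abs_self _
  have ha2 : -(S a (2 ^ k - 1) - S a' (2 ^ k - 1)) ≤ |S a (2 ^ k - 1) - S a' (2 ^ k - 1)| :=
    neg_le_abs _
  have hb1 : S a (2 ^ (k+1) - 1) - S a' (2 ^ (k+1) - 1)
      ≤ |S a (2 ^ (k+1) - 1) - S a' (2 ^ (k+1) - 1)| := le_abs_self _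
  have hb2 : -(S a (2 ^ (k+1) - 1) - S a' (2 ^ (k+1) - 1))
      ≤ |S a (2 ^ (k+1) - 1) - S a' (2 ^ (k+1) - 1)| := neg_le_abs _
  cases hab : a (Nat.unpair k).1 <;> cases hab' : a' (Nat.unpair k).1 <;>
    rw [hab] at hS <;> rw [hab'] at hS' <;> simp at hS hS' <;>
    first
      | (exact absurd (hab.trans hab'.symm) hne)
      | linarith

/-- The injection from `ℕ → Bool` into the boundary. -/
lemma inj_boundary :
    Function.Injective (fun a : ℕ → Bool => Quot.mk Asymp ⟨stepSeq a, geo a⟩) := by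
  intro a a' hq
  by_contra hne
  exact not_asymp hne (asymp_equiv.eqvGen_iff.mp (Quot.eq.mp hq))

end BZ2

/-- the set of asymptoty classes of geodesic rays from the origin
in `ℤ²` has the cardinality of the continuum. -/
theorem boundary_Z2_card_continuum :
    Cardinal.mk (Quot Asymp) = Cardinal.continuum := by
  apply le_antisymm
  · calc Cardinal.mk (Quot Asymp)
        ≤ Cardinal.mk {w : ℕ → ℤ × ℤ // IsGeodesicStepSeq w} := Cardinal.mk_quot_le
      _ ≤ Cardinal.mk (ℕ → ℤ × ℤ) := Cardinal.mk_subtype_le _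
      _ = Cardinal.continuum := by
          rw [Cardinal.mk_arrow]
          simp [Cardinal.mk_denumerable, Cardinal.aleph0_power_aleph0]
  · calc Cardinal.continuum = Cardinal.mk (ℕ → Bool) := by
          rw [Cardinal.mk_arrow]
          simp [Cardinal.two_power_aleph0]
      _ ≤ Cardinal.mk (Quot Asymp) := Cardinal.mk_le_of_injective BZ2.inj_boundary
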